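/- Let G1, G2 be groups and φ : G1 → G2 a bijection such that a multiset over G1 is a product-one sequence over G1 if and only if its termwise image under φ is a product-one sequence over G2. If g1, g2 in G1 satisfy g1 g2 ≠ g2 g1 and φ(g1 g2) = φ(g1) φ(g2), then φ(g2 g1) = φ(g2) φ(g1). -/
import Mathlib


/-- A multiset `S` over a group `G` is a *product-one sequence* if its terms can be
ordered so that their product is `1`. -/
def IsProductOne {G : Type*} [Group G] (S : Multiset G) : Prop :=
  ∃ l : List G, (l : Multiset G) = S ∧ l.prod = 1

/-- The monoid `B(G)` of product-one sequences over `G`, as a submonoid of the free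
abelian monoid (finite multisets under addition) over `G`. -/
def ProductOneSubmonoid (G : Type*) [Group G] : AddSubmonoid (Multiset G) where
  carrier := {S | IsProductOne S}
  zero_mem' := ⟨[], rfl, rfl⟩
  add_mem' := by
    rintro a b ⟨l1, rfl, p1⟩ ⟨l2, rfl, p2⟩
    exact ⟨l1 ++ l2, by simp, by simp [p1, p2]⟩

lemma perm2 {α : Type*} {l : List α} {a b : α} (h : l.Perm [a, b]) :
    l = [a, b] ∨ l = [b, a] := by
  have := List.mem_permutations'.2 h
  simp [List.permutations', List.permutations'Aux] at this
  tauto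

lemma perm3 {α : Type*} {l : List α} {a b c : α} (h : l.Perm [a, b, c]) :
    l = [a,b,c] ∨ l = [a,c,b] ∨ l = [b,a,c] ∨ l = [b,c,a] ∨ l = [c,a,b] ∨ l = [c,b,a] := by
  have := List.mem_permutations'.2 h
  simp [List.permutations', List.permutations'Aux] at this
  tauto

lemma phi_inv {G1 G2 : Type*} [Group G1] [Group G2]
    (φ : G1 → G2)
    (h : ∀ S : Multiset G1, IsProductOne S ↔ IsProductOne (S.map φ))
    (x : G1) : φ x⁻¹ = (φ x)⁻¹ := by
  have h1 : IsProductOne ({x, x⁻¹} : Multiset G1) := ⟨[x, x⁻¹], rfl, by simp⟩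
  obtain ⟨l, hl, hp⟩ := (h _).1 h1
  have hperm : l.Perm [φ x, φ x⁻¹] := by
    rw [← Multiset.coe_eq_coe, hl]
    rfl
  rcases perm2 hperm with rfl | rfl <;> simp only [List.prod_cons, List.prod_nil, mul_one] at hp
  · exact eq_inv_of_mul_eq_one_right hp
  · exact eq_inv_of_mul_eq_one_left hp

theorem A4_consequence (G1 G2 : Type*) [Group G1] [Group G2]
    (φ : G1 → G2) (hbij : Function.Bijective φ)
    (h : ∀ S : Multiset G1, IsProductOne S ↔ IsProductOne (S.map φ))
    (g1 g2 : G1) (hne : g1 * g2 ≠ g2 * g1)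
    (h12 : φ (g1 * g2) = φ g1 * φ g2) :
    φ (g2 * g1) = φ g2 * φ g1 := by
  have h1 : IsProductOne ({g2, g1, (g2 * g1)⁻¹} : Multiset G1) :=
    ⟨[g2, g1, (g2 * g1)⁻¹], rfl, by simp [mul_assoc]⟩
  obtain ⟨l, hl, hp⟩ := (h _).1 h1
  have hperm : l.Perm [φ g2, φ g1, (φ (g2 * g1))⁻¹] := by
    rw [← Multiset.coe_eq_coe, hl]
    rw [show (φ (g2 * g1))⁻¹ = φ ((g2 * g1)⁻¹) from (phi_inv φ h _).symm]
    rfl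
  have key : φ (g2 * g1) = φ g1 * φ g2 ∨ φ (g2 * g1) = φ g2 * φ g1 := by
    rcases perm3 hperm with rfl | rfl | rfl | rfl | rfl | rfl <;>
      simp only [List.prod_cons, List.prod_nil, mul_one] at hp
    · exact Or.inr (mul_inv_eq_one.mp (by rw [mul_assoc]; exact hp)).symm
    · refine Or.inl ?_
      have hb := mul_eq_one_iff_inv_eq.mp hp
      have : φ g1 = φ (g2*g1) * (φ g2)⁻¹ := by
        rw [hb, ← mul_assoc, mul_inv_cancel, one_mul]
      rw [this, inv_mul_cancel_right]
    · exact Or.inl (mul_inv_eq_one.mp (by rw [mul_assoc]; exact hp)).symm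
    · refine Or.inr ?_
      have hb := mul_eq_one_iff_inv_eq.mp hp
      have : φ g2 = φ (g2*g1) * (φ g1)⁻¹ := by
        rw [hb, ← mul_assoc, mul_inv_cancel, one_mul]
      rw [this, inv_mul_cancel_right]
    · exact Or.inr (inv_mul_eq_one.mp hp)
    · exact Or.inl (inv_mul_eq_one.mp hp)
  rcases key with h' | h'
  · exact absurd (hbij.1 (h'.trans h12.symm)) (fun e => hne e.symm)
  · exact h'
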